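/- For every q ∈ ℂ with q ≠ 0 and q ≠ 1, the q-deformed Witt superalgebra (W^q, [·,·]_σ, α) is a Hom-Lie superalgebra: the bracket is even and super skew-symmetric, and for all homogeneous x, y, z ∈ W^q the super Hom-Jacobi identity (−1)^{|x||z|}[α(x),[y,z]] + (−1)^{|z||y|}[α(z),[x,y]] + (−1)^{|y||x|}[α(y),[z,x]] = 0 holds. -/

import Mathlib

/-- A Hom-Lie superalgebra structure. -/
def IsHomLieSuper {K G : Type*} [Field K] [AddCommGroup G] [Module K G]
    (Gr : ZMod 2 → Submodule K G) (br : G → G → G) (α : G → G) : Prop :=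
  IsLinearMap K α ∧
  (∀ x : G, IsLinearMap K (br x)) ∧
  (∀ y : G, IsLinearMap K fun x => br x y) ∧
  (∀ i j : ZMod 2, ∀ x ∈ Gr i, ∀ y ∈ Gr j, br x y ∈ Gr (i + j)) ∧
  (∀ i : ZMod 2, ∀ x ∈ Gr i, α x ∈ Gr i) ∧
  (∀ i j : ZMod 2, ∀ x ∈ Gr i, ∀ y ∈ Gr j,
      br x y = (-((-1 : K) ^ (i.val * j.val))) • br y x) ∧
  (∀ i j l : ZMod 2, ∀ x ∈ Gr i, ∀ y ∈ Gr j, ∀ z ∈ Gr l,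
      ((-1 : K) ^ (i.val * l.val)) • br (α x) (br y z) +
      ((-1 : K) ^ (l.val * j.val)) • br (α z) (br x y) +
      ((-1 : K) ^ (j.val * i.val)) • br (α y) (br z x) = 0)

/-- The `q`-number `{n} = (1 - qⁿ)/(1 - q)`. -/
noncomputable def qInt (q : ℂ) (n : ℤ) : ℂ := (1 - q ^ n) / (1 - q)

/-- The grading of the `q`-deformed Witt superalgebra: even part spanned by the `L n`
(`= b (Sum.inl n)`), odd part spanned by the `G n` (`= b (Sum.inr n)`). -/
def wGr {W : Type*} [AddCommGroup W] [Module ℂ W] (b : Module.Basis (ℤ ⊕ ℤ) ℂ W) :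
    ZMod 2 → Submodule ℂ W :=
  fun i => if i = 0 then Submodule.span ℂ (Set.range fun n : ℤ => b (Sum.inl n))
           else Submodule.span ℂ (Set.range fun n : ℤ => b (Sum.inr n))

section Helpers
variable {W : Type*} [AddCommGroup W] [Module ℂ W]

lemma linSpan (f : W → W) (hf : IsLinearMap ℂ f) (M : Submodule ℂ W) (S : Set W)
    (h : ∀ x ∈ S, f x ∈ M) : ∀ x ∈ Submodule.span ℂ S, f x ∈ M := by
  intro x hx
  have hle : Submodule.span ℂ S ≤ M.comap hf.mk' := Submodule.span_le.2 h
  exact hle hx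

lemma biSpan (f : W → W → W) (h1 : ∀ x, IsLinearMap ℂ (f x))
    (h2 : ∀ y, IsLinearMap ℂ fun x => f x y) (M : Submodule ℂ W) (S T : Set W)
    (h : ∀ x ∈ S, ∀ y ∈ T, f x y ∈ M) :
    ∀ x ∈ Submodule.span ℂ S, ∀ y ∈ Submodule.span ℂ T, f x y ∈ M := by
  intro x hx
  exact linSpan (f x) (h1 x) M T
    (fun y hy => linSpan (fun x => f x y) (h2 y) M S (fun x hx => h x hx y hy) x hx)

lemma triSpan (f : W → W → W → W)
    (h1 : ∀ x y, IsLinearMap ℂ (f x y))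
    (h2 : ∀ x z, IsLinearMap ℂ fun y => f x y z)
    (h3 : ∀ y z, IsLinearMap ℂ fun x => f x y z)
    (M : Submodule ℂ W) (S T U : Set W)
    (h : ∀ x ∈ S, ∀ y ∈ T, ∀ z ∈ U, f x y z ∈ M) :
    ∀ x ∈ Submodule.span ℂ S, ∀ y ∈ Submodule.span ℂ T, ∀ z ∈ Submodule.span ℂ U,
      f x y z ∈ M := by
  intro x hx y hy z hz
  refine linSpan (f x y) (h1 x y) M U ?_ z hz
  intro z hzU
  refine linSpan (fun y => f x y z) (h2 x z) M T ?_ y hy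
  intro y hyT
  exact linSpan (fun x => f x y z) (h3 y z) M S (fun x hx => h x hx y hyT z hzU) x hx
end Helpers

/-- For every `q ∈ ℂ`, `q ≠ 0`, `q ≠ 1`, the `q`-deformed Witt
superalgebra `(W^q, [·,·]_σ, α)` is a Hom-Lie superalgebra. -/
theorem qWitt_isHomLieSuper
    (q : ℂ) (hq0 : q ≠ 0) (hq1 : q ≠ 1)
    (W : Type*) [AddCommGroup W] [Module ℂ W] (b : Module.Basis (ℤ ⊕ ℤ) ℂ W)
    (br : W → W → W)
    (hbr1 : ∀ x, IsLinearMap ℂ (br x)) (hbr2 : ∀ y, IsLinearMap ℂ fun x => br x y)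
    (α : W → W) (hα : IsLinearMap ℂ α)
    (hLL : ∀ n m : ℤ, br (b (Sum.inl n)) (b (Sum.inl m)) =
        (qInt q m - qInt q n) • b (Sum.inl (n + m)))
    (hLG : ∀ n m : ℤ, br (b (Sum.inl n)) (b (Sum.inr m)) =
        (qInt q (m + 1) - qInt q n) • b (Sum.inr (n + m)))
    (hGL : ∀ n m : ℤ, br (b (Sum.inr m)) (b (Sum.inl n)) =
        -((qInt q (m + 1) - qInt q n) • b (Sum.inr (n + m))))
    (hGG : ∀ n m : ℤ, br (b (Sum.inr n)) (b (Sum.inr m)) = 0)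
    (hαL : ∀ n : ℤ, α (b (Sum.inl n)) = (1 + q ^ n) • b (Sum.inl n))
    (hαG : ∀ n : ℤ, α (b (Sum.inr n)) = (1 + q ^ (n + 1)) • b (Sum.inr n)) :
    IsHomLieSuper (wGr b) br α := by
  have brA1 : ∀ x y z : W, br x (y + z) = br x y + br x z := fun x y z => (hbr1 x).map_add y z
  have brS1 : ∀ (c : ℂ) (x y : W), br x (c • y) = c • br x y := fun c x y => (hbr1 x).map_smul c y
  have brA2 : ∀ x y z : W, br (x + y) z = br x z + br y z := fun x y z => (hbr2 z).map_add x y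
  have brS2 : ∀ (c : ℂ) (x y : W), br (c • x) y = c • br x y := fun c x y => (hbr2 y).map_smul c x
  have brZ1 : ∀ x : W, br x 0 = 0 := fun x => (hbr1 x).map_zero
  have brZ2 : ∀ y : W, br 0 y = 0 := fun y => (hbr2 y).map_zero
  have brN1 : ∀ x y : W, br x (-y) = -br x y := fun x y => (hbr1 x).map_neg y
  have brN2 : ∀ x y : W, br (-x) y = -br x y := fun x y => (hbr2 y).map_neg x
  have αA := hα.map_add
  have αS := hα.map_smul
  have hGr0 : wGr b 0 = Submodule.span ℂ (Set.range fun n : ℤ => b (Sum.inl n)) := by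
    simp [wGr]
  have hGr1 : wGr b 1 = Submodule.span ℂ (Set.range fun n : ℤ => b (Sum.inr n)) := by
    simp [wGr]
  have h1q : (1 : ℂ) - q ≠ 0 := sub_ne_zero.2 (Ne.symm hq1)
  have hcase : ∀ i : ZMod 2, i = 0 ∨ i = 1 := by decide
  refine ⟨hα, hbr1, hbr2, ?_, ?_, ?_, ?_⟩
  · -- grading of the bracket
    intro i j
    rcases hcase i with rfl | rfl <;> rcases hcase j with rfl | rfl
    · rw [show ((0 : ZMod 2) + 0) = 0 from rfl, hGr0]
      refine biSpan br hbr1 (fun y => hbr2 y) _ _ _ ?_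
      rintro _ ⟨n, rfl⟩ _ ⟨m, rfl⟩
      rw [hLL]
      exact Submodule.smul_mem _ _ (Submodule.subset_span ⟨n + m, rfl⟩)
    · rw [show ((0 : ZMod 2) + 1) = 1 from rfl, hGr0, hGr1]
      refine biSpan br hbr1 (fun y => hbr2 y) _ _ _ ?_
      rintro _ ⟨n, rfl⟩ _ ⟨m, rfl⟩
      rw [hLG]
      exact Submodule.smul_mem _ _ (Submodule.subset_span ⟨n + m, rfl⟩)
    · rw [show ((1 : ZMod 2) + 0) = 1 from rfl, hGr0, hGr1]
      refine biSpan br hbr1 (fun y => hbr2 y) _ _ _ ?_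
      rintro _ ⟨m, rfl⟩ _ ⟨n, rfl⟩
      rw [hGL]
      exact Submodule.neg_mem _
        (Submodule.smul_mem _ _ (Submodule.subset_span ⟨n + m, rfl⟩))
    · rw [show ((1 : ZMod 2) + 1) = 0 from rfl, hGr0, hGr1]
      refine biSpan br hbr1 (fun y => hbr2 y) _ _ _ ?_
      rintro _ ⟨n, rfl⟩ _ ⟨m, rfl⟩
      rw [hGG]
      exact Submodule.zero_mem _
  · -- α preserves the grading
    intro i
    rcases hcase i with rfl | rfl
    · rw [hGr0]
      refine linSpan α hα _ _ ?_
      rintro _ ⟨n, rfl⟩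
      rw [hαL]
      exact Submodule.smul_mem _ _ (Submodule.subset_span ⟨n, rfl⟩)
    · rw [hGr1]
      refine linSpan α hα _ _ ?_
      rintro _ ⟨n, rfl⟩
      rw [hαG]
      exact Submodule.smul_mem _ _ (Submodule.subset_span ⟨n, rfl⟩)
  · -- super skew-symmetry
    have v0 : ((0 : ZMod 2)).val = 0 := rfl
    have v1 : ((1 : ZMod 2)).val = 1 := rfl
    intro i j
    rcases hcase i with rfl | rfl <;> rcases hcase j with rfl | rfl <;>
      simp only [v0, v1, mul_zero, zero_mul, mul_one, one_mul, pow_zero, pow_one,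
        neg_neg, hGr0, hGr1] <;>
      intro x hx y hy <;> rw [← sub_eq_zero, ← Submodule.mem_bot ℂ]
    · refine biSpan (fun x y => br x y - (-(1:ℂ)) • br y x) ?_ ?_ ⊥ _ _ ?_ x hx y hy
      · intro x
        refine ⟨fun u v => ?_, fun c u => ?_⟩ <;>
          simp [brA1, brA2, brS1, brS2, smul_add, smul_sub, smul_comm] <;> abel
      · intro y
        refine ⟨fun u v => ?_, fun c u => ?_⟩ <;>
          simp [brA1, brA2, brS1, brS2, smul_add, smul_sub, smul_comm] <;> abel
      · rintro _ ⟨n, rfl⟩ _ ⟨m, rfl⟩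
        simp only [Submodule.mem_bot, hLL]
        rw [show m + n = n + m from by ring]
        module
    · refine biSpan (fun x y => br x y - (-(1:ℂ)) • br y x) ?_ ?_ ⊥ _ _ ?_ x hx y hy
      · intro x
        refine ⟨fun u v => ?_, fun c u => ?_⟩ <;>
          simp [brA1, brA2, brS1, brS2, smul_add, smul_sub, smul_comm] <;> abel
      · intro y
        refine ⟨fun u v => ?_, fun c u => ?_⟩ <;>
          simp [brA1, brA2, brS1, brS2, smul_add, smul_sub, smul_comm] <;> abel
      · rintro _ ⟨n, rfl⟩ _ ⟨m, rfl⟩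
        simp only [Submodule.mem_bot, hLG, hGL]
        module
    · refine biSpan (fun x y => br x y - (-(1:ℂ)) • br y x) ?_ ?_ ⊥ _ _ ?_ x hx y hy
      · intro x
        refine ⟨fun u v => ?_, fun c u => ?_⟩ <;>
          simp [brA1, brA2, brS1, brS2, smul_add, smul_sub, smul_comm] <;> abel
      · intro y
        refine ⟨fun u v => ?_, fun c u => ?_⟩ <;>
          simp [brA1, brA2, brS1, brS2, smul_add, smul_sub, smul_comm] <;> abel
      · rintro _ ⟨m, rfl⟩ _ ⟨n, rfl⟩
        simp only [Submodule.mem_bot, hLG, hGL]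
        module
    · refine biSpan (fun x y => br x y - (1:ℂ) • br y x) ?_ ?_ ⊥ _ _ ?_ x hx y hy
      · intro x
        refine ⟨fun u v => ?_, fun c u => ?_⟩ <;>
          simp [brA1, brA2, brS1, brS2, smul_add, smul_sub, smul_comm] <;> abel
      · intro y
        refine ⟨fun u v => ?_, fun c u => ?_⟩ <;>
          simp [brA1, brA2, brS1, brS2, smul_add, smul_sub, smul_comm] <;> abel
      · rintro _ ⟨n, rfl⟩ _ ⟨m, rfl⟩
        simp [Submodule.mem_bot, hGG]
  · -- super Hom-Jacobi
    have v0 : ((0 : ZMod 2)).val = 0 := rfl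
    have v1 : ((1 : ZMod 2)).val = 1 := rfl
    have lin1 : ∀ (s1 s2 s3 : ℂ) (x y : W), IsLinearMap ℂ
        (fun z => s1 • br (α x) (br y z) + s2 • br (α z) (br x y) + s3 • br (α y) (br z x)) := by
      intro s1 s2 s3 x y
      refine ⟨fun u v => ?_, fun c u => ?_⟩ <;>
        simp only [αA, αS, brA1, brA2, brS1, brS2, smul_add, smul_smul, mul_comm] <;> abel
    have lin2 : ∀ (s1 s2 s3 : ℂ) (x z : W), IsLinearMap ℂ
        (fun y => s1 • br (α x) (br y z) + s2 • br (α z) (br x y) + s3 • br (α y) (br z x)) := by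
      intro s1 s2 s3 x z
      refine ⟨fun u v => ?_, fun c u => ?_⟩ <;>
        simp only [αA, αS, brA1, brA2, brS1, brS2, smul_add, smul_smul, mul_comm] <;> abel
    have lin3 : ∀ (s1 s2 s3 : ℂ) (y z : W), IsLinearMap ℂ
        (fun x => s1 • br (α x) (br y z) + s2 • br (α z) (br x y) + s3 • br (α y) (br z x)) := by
      intro s1 s2 s3 y z
      refine ⟨fun u v => ?_, fun c u => ?_⟩ <;>
        simp only [αA, αS, brA1, brA2, brS1, brS2, smul_add, smul_smul, mul_comm] <;> abel
    intro i j l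
    rcases hcase i with rfl | rfl <;> rcases hcase j with rfl | rfl <;>
      rcases hcase l with rfl | rfl <;>
      simp only [hGr0, hGr1] <;>
      intro x hx y hy z hz <;>
      rw [← Submodule.mem_bot ℂ] <;>
      refine triSpan _ (fun u v => lin1 _ _ _ u v) (fun u v => lin2 _ _ _ u v)
        (fun u v => lin3 _ _ _ u v) ⊥ _ _ _ ?_ x hx y hy z hz <;>
      rintro _ ⟨n, rfl⟩ _ ⟨m, rfl⟩ _ ⟨k, rfl⟩ <;>
      simp only [Submodule.mem_bot, v0, v1, mul_zero, zero_mul, mul_one, one_mul,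
        pow_zero, pow_one, one_smul, neg_smul, hαL, hαG, hLL, hLG, hGL, hGG,
        brS1, brS2, brN1, brN2, brZ1, brZ2, smul_zero, add_zero, zero_add,
        smul_neg, neg_zero, smul_smul]
    · rw [show (k + (n + m) : ℤ) = n + (m + k) from by ring,
          show (m + (k + n) : ℤ) = n + (m + k) from by ring]
      simp only [← neg_smul, ← add_smul]
      refine smul_eq_zero_of_left ?_ _
      simp only [qInt, zpow_add₀ hq0, zpow_one]
      ring
    · rw [show (n + m + k : ℤ) = n + (m + k) from by ring,
          show (m + (n + k) : ℤ) = n + (m + k) from by ring]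
      simp only [← neg_smul, ← add_smul]
      refine smul_eq_zero_of_left ?_ _
      simp only [qInt, zpow_add₀ hq0, zpow_one]
      ring
    · rw [show (k + (n + m) : ℤ) = n + (k + m) from by ring,
          show (k + n + m : ℤ) = n + (k + m) from by ring]
      simp only [← neg_smul, ← add_smul]
      refine smul_eq_zero_of_left ?_ _
      simp only [qInt, zpow_add₀ hq0, zpow_one]
      ring
    · rw [show (k + (m + n) : ℤ) = m + k + n from by ring,
          show (m + (k + n) : ℤ) = m + k + n from by ring]
      simp only [← neg_smul, ← add_smul]
      refine smul_eq_zero_of_left ?_ _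
      simp only [qInt, zpow_add₀ hq0, zpow_one]
      ring
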